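/- Let A be ν×ν, B be ν×m, C be p×ν and D be p×m complex matrices, and let R be the (ν+p)×(ν+m) block matrix R = [[A, B], [C, D]]. Assume R R* = I_{ν+p}. Then for every z on the unit circle 𝕋 such that z·I_ν − A is invertible, the matrix F(z) = C (z·I_ν − A)^{-1} B + D satisfies F(z) F(z)* = I_p. -/

import Mathlib

open Matrix

/-- if the realization matrix `R = [[A, B], [C, D]]` satisfies
`R Rᴴ = I`, then `F(z) = C (zI - A)⁻¹ B + D` is a co-isometry for every `z` on
the unit circle at which `zI - A` is invertible. -/
theorem realization_coisometry
    (ν p m : ℕ)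
    (A : Matrix (Fin ν) (Fin ν) ℂ) (B : Matrix (Fin ν) (Fin m) ℂ)
    (C : Matrix (Fin p) (Fin ν) ℂ) (D : Matrix (Fin p) (Fin m) ℂ)
    (hR : Matrix.fromBlocks A B C D * (Matrix.fromBlocks A B C D)ᴴ = 1)
    (z : ℂ) (hz : ‖z‖ = 1)
    (hzA : IsUnit (z • (1 : Matrix (Fin ν) (Fin ν) ℂ) - A)) :
    (C * (z • (1 : Matrix (Fin ν) (Fin ν) ℂ) - A)⁻¹ * B + D) *
      (C * (z • (1 : Matrix (Fin ν) (Fin ν) ℂ) - A)⁻¹ * B + D)ᴴ = 1 := by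
  -- Extract the four block equations from `hR`.
  rw [fromBlocks_conjTranspose, fromBlocks_multiply, ← fromBlocks_one] at hR
  have h1 : A * Aᴴ + B * Bᴴ = 1 := congrArg Matrix.toBlocks₁₁ hR
  have h2 : A * Cᴴ + B * Dᴴ = 0 := congrArg Matrix.toBlocks₁₂ hR
  have h3 : C * Aᴴ + D * Bᴴ = 0 := congrArg Matrix.toBlocks₂₁ hR
  have h4 : C * Cᴴ + D * Dᴴ = 1 := congrArg Matrix.toBlocks₂₂ hR
  set S : Matrix (Fin ν) (Fin ν) ℂ := z • (1 : Matrix (Fin ν) (Fin ν) ℂ) with hS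
  set M : Matrix (Fin ν) (Fin ν) ℂ := S - A with hM
  set G : Matrix (Fin ν) (Fin ν) ℂ := M⁻¹ with hGdef
  have hdet : IsUnit M.det := (isUnit_iff_isUnit_det M).mp hzA
  have hGM : G * M = 1 := nonsing_inv_mul M hdet
  have hMG : M * G = 1 := mul_nonsing_inv M hdet
  have hGH : Gᴴ = (Mᴴ)⁻¹ := conjTranspose_nonsing_inv M
  have hdetH : IsUnit (Mᴴ).det := by
    rw [det_conjTranspose]; exact hdet.map (starRingEnd ℂ)
  have hMGH : Mᴴ * Gᴴ = 1 := by rw [hGH]; exact mul_nonsing_inv _ hdetH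
  have hGMH : Gᴴ * Mᴴ = 1 := by rw [hGH]; exact nonsing_inv_mul _ hdetH
  have hzz : z * star z = 1 := by
    have h := Complex.mul_conj z
    rw [Complex.normSq_eq_norm_sq, hz] at h
    simpa using h
  have hSS : S * Sᴴ = 1 := by
    rw [hS]
    have hzz' : (starRingEnd ℂ) z * z = 1 := by rw [mul_comm]; exact hzz
    simp [conjTranspose_smul, smul_smul, hzz']
  have hMH : Mᴴ = Sᴴ - Aᴴ := by rw [hM, conjTranspose_sub]
  -- Key algebraic identity: M Mᴴ + A Mᴴ + M Aᴴ = 1 - A Aᴴ.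
  have hE : M * Mᴴ + A * Mᴴ + M * Aᴴ = 1 - A * Aᴴ := by
    calc M * Mᴴ + A * Mᴴ + M * Aᴴ
        = S * Sᴴ - A * Aᴴ := by rw [hM, hMH]; noncomm_ring
      _ = 1 - A * Aᴴ := by rw [hSS]
  -- Hence `G (1 - A Aᴴ) Gᴴ = G A + Aᴴ Gᴴ + 1`.
  have hkey : G * (1 - A * Aᴴ) * Gᴴ = G * A + Aᴴ * Gᴴ + 1 := by
    rw [← hE]
    calc G * (M * Mᴴ + A * Mᴴ + M * Aᴴ) * Gᴴ
        = (G * M) * (Mᴴ * Gᴴ) + G * A * (Mᴴ * Gᴴ) + (G * M) * (Aᴴ * Gᴴ) := by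
          noncomm_ring
      _ = G * A + Aᴴ * Gᴴ + 1 := by
          rw [hGM, hMGH]; noncomm_ring
  -- Derived block relations.
  have hBB : B * Bᴴ = 1 - A * Aᴴ := eq_sub_of_add_eq' h1
  have hBD : B * Dᴴ = -(A * Cᴴ) := eq_neg_of_add_eq_zero_right h2
  have hDB : D * Bᴴ = -(C * Aᴴ) := eq_neg_of_add_eq_zero_right h3
  have hDD : D * Dᴴ = 1 - C * Cᴴ := eq_sub_of_add_eq' h4
  -- Expand the product.
  show (C * G * B + D) * (C * G * B + D)ᴴ = 1
  have expand : (C * G * B + D) * (C * G * B + D)ᴴ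
      = C * (G * (B * Bᴴ) * Gᴴ) * Cᴴ + C * G * (B * Dᴴ) + (D * Bᴴ) * Gᴴ * Cᴴ
        + D * Dᴴ := by
    simp only [conjTranspose_add, conjTranspose_mul, Matrix.add_mul,
      Matrix.mul_add, Matrix.mul_assoc]
    abel
  rw [expand, hBB, hBD, hDB, hDD, hkey]
  simp only [Matrix.mul_add, Matrix.add_mul, Matrix.mul_one, Matrix.mul_neg,
    Matrix.neg_mul, Matrix.mul_assoc]
  abel
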